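/- Let δ be a positive integer divisible by 6 and let Q ∈ ℤ[T]. For an integer t with Q(t) ≠ 0, define h(t) = ∏ (−3/p), the product running over all primes p not dividing δ such that ν_p(Q(t)) ≡ 2 or 4 (mod 6). Let t₁, t₂ be integers, c a nonzero integer, l and η squarefree integers, and q₀ a prime with q₀ ∤ δ and gcd(q₀, cη) = 1, such that Q(t₁) = c²·l with gcd(c,l) = 1, and Q(t₂) = (c·q₀)²·η with gcd(c,η) = 1. If the Legendre symbol (−3/q₀) equals −1, then h(t₁) = −h(t₂). -/

import Mathlib

/-- The corrective term `h(t) = ∏ (-3/p)`, the product running over the primes `p ∤ δ`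
with `ν_p(Q(t)) ≡ 2, 4 (mod 6)` (types `II`, `II*`, `IV`, `IV*`). -/
def corrTerm (δ : ℕ) (Q : Polynomial ℤ) (t : ℤ) : ℤ :=
  ∏ p ∈ ((Q.eval t).natAbs.primeFactors.filter
    (fun p => ¬ p ∣ δ ∧
      (padicValInt p (Q.eval t) % 6 = 2 ∨ padicValInt p (Q.eval t) % 6 = 4))),
    if hp : p.Prime then @legendreSym p ⟨hp⟩ (-3) else 1

lemma my_not_dvd_of_coprime {p : ℕ} (hp : p.Prime) {a b : ℤ} (hab : IsCoprime a b)
    (hpa : (p : ℤ) ∣ a) : ¬ (p : ℤ) ∣ b := by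
  intro hpb
  have hu : IsUnit ((p : ℤ)) := hab.isUnit_of_dvd' hpa hpb
  rw [Int.isUnit_iff] at hu
  have h2 := hp.two_le
  rcases hu with h | h <;> omega

lemma my_dvd_of_val {p : ℕ} [Fact p.Prime] {a : ℤ} (h : padicValInt p a ≠ 0) :
    (p : ℤ) ∣ a := by
  by_contra hnd
  exact h (padicValInt.eq_zero_of_not_dvd hnd)

lemma my_val_le_one {p : ℕ} (hp : p.Prime) {m : ℤ} (hm : Squarefree m) :
    padicValInt p m ≤ 1 := by
  have h1 : Squarefree m.natAbs := Int.squarefree_natAbs.mpr hm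
  have := h1.natFactorization_le_one p
  rwa [Nat.factorization_def _ hp] at this

lemma my_mem_iff (δ : ℕ) {c m : ℤ} (hc : c ≠ 0) (hm : Squarefree m)
    (hcm : IsCoprime c m) (p : ℕ) :
    (p ∈ (c ^ 2 * m).natAbs.primeFactors.filter
      (fun p => ¬ p ∣ δ ∧
        (padicValInt p (c ^ 2 * m) % 6 = 2 ∨ padicValInt p (c ^ 2 * m) % 6 = 4)))
    ↔ (p.Prime ∧ ¬ p ∣ δ ∧
        (padicValInt p c % 3 = 1 ∨ padicValInt p c % 3 = 2)) := by
  have hm0 : m ≠ 0 := hm.ne_zero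
  have hne : c ^ 2 * m ≠ 0 := mul_ne_zero (pow_ne_zero 2 hc) hm0
  rw [Finset.mem_filter, Nat.mem_primeFactors]
  constructor
  · rintro ⟨⟨hp, hdvd, _⟩, hδ', hmod⟩
    haveI : Fact p.Prime := ⟨hp⟩
    refine ⟨hp, hδ', ?_⟩
    have hval : padicValInt p (c ^ 2 * m) = 2 * padicValInt p c + padicValInt p m := by
      rw [padicValInt.mul (pow_ne_zero 2 hc) hm0, sq, padicValInt.mul hc hc]
      ring
    by_cases hpc : (p : ℤ) ∣ c
    · have hpm : padicValInt p m = 0 :=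
        padicValInt.eq_zero_of_not_dvd (my_not_dvd_of_coprime hp hcm hpc)
      omega
    · have hvc : padicValInt p c = 0 := padicValInt.eq_zero_of_not_dvd hpc
      have hle : padicValInt p m ≤ 1 := my_val_le_one hp hm
      omega
  · rintro ⟨hp, hδ', hmod⟩
    haveI : Fact p.Prime := ⟨hp⟩
    have hvc : padicValInt p c ≠ 0 := by omega
    have hpc : (p : ℤ) ∣ c := my_dvd_of_val hvc
    have hpm : padicValInt p m = 0 :=
      padicValInt.eq_zero_of_not_dvd (my_not_dvd_of_coprime hp hcm hpc)
    have hval : padicValInt p (c ^ 2 * m) = 2 * padicValInt p c + padicValInt p m := by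
      rw [padicValInt.mul (pow_ne_zero 2 hc) hm0, sq, padicValInt.mul hc hc]
      ring
    have hdvd : p ∣ (c ^ 2 * m).natAbs := by
      rw [← Int.natAbs_natCast p, Int.natAbs_dvd_natAbs]
      exact hpc.trans (Dvd.intro_left _ rfl) |>.trans ⟨m, by ring⟩
    exact ⟨⟨hp, hdvd, by simpa using hne⟩, hδ', by omega⟩

/-- Sign change of the corrective term at a prime `q₀` with `(-3/q₀) = -1`. -/
theorem stmt_14 (δ : ℕ) (hδ : 0 < δ) (h6 : 6 ∣ δ) (Q : Polynomial ℤ)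
    (t₁ t₂ c l η : ℤ) (hc : c ≠ 0) (hl : Squarefree l) (hη : Squarefree η)
    (q₀ : ℕ) (hq : q₀.Prime) (hqδ : ¬ q₀ ∣ δ)
    (hqcη : Int.gcd (q₀ : ℤ) (c * η) = 1)
    (h1 : Q.eval t₁ = c ^ 2 * l) (hcl : Int.gcd c l = 1)
    (h2 : Q.eval t₂ = (c * (q₀ : ℤ)) ^ 2 * η) (hcη : Int.gcd c η = 1)
    (hleg : @legendreSym q₀ ⟨hq⟩ (-3) = -1) :
    corrTerm δ Q t₁ = - corrTerm δ Q t₂ := by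
  haveI : Fact q₀.Prime := ⟨hq⟩
  have hcopl : IsCoprime c l := Int.isCoprime_iff_gcd_eq_one.mpr hcl
  have hcopη : IsCoprime c η := Int.isCoprime_iff_gcd_eq_one.mpr hcη
  have hqcη' : IsCoprime ((q₀ : ℤ)) (c * η) := Int.isCoprime_iff_gcd_eq_one.mpr hqcη
  have hq0c : IsCoprime ((q₀ : ℤ)) c := hqcη'.of_mul_right_left
  have hq0η : IsCoprime ((q₀ : ℤ)) η := hqcη'.of_mul_right_right
  have hq0_ne_c : ¬ (q₀ : ℤ) ∣ c := my_not_dvd_of_coprime hq hq0c (dvd_refl _)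
  have hcq0 : c * (q₀ : ℤ) ≠ 0 :=
    mul_ne_zero hc (Int.natCast_ne_zero.mpr hq.ne_zero)
  have hcop2 : IsCoprime (c * (q₀ : ℤ)) η := hcopη.mul_left hq0η.symm.symm
  -- valuation of c*q₀ at q₀ is 1, at p ≠ q₀ is ν_p(c)
  have hvq0 : padicValInt q₀ (c * (q₀ : ℤ)) = 1 := by
    rw [padicValInt_mul_eq_succ c hc, padicValInt.eq_zero_of_not_dvd hq0_ne_c]
  have hvp : ∀ p : ℕ, p.Prime → p ≠ q₀ →
      padicValInt p (c * (q₀ : ℤ)) = padicValInt p c := by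
    intro p hp hpq
    haveI : Fact p.Prime := ⟨hp⟩
    have hnd : ¬ (p : ℤ) ∣ (q₀ : ℤ) := by
      rw [Int.natCast_dvd_natCast]
      intro h
      exact hpq ((Nat.prime_dvd_prime_iff_eq hp hq).mp h)
    rw [padicValInt.mul hc (Int.natCast_ne_zero.mpr hq.ne_zero),
      padicValInt.eq_zero_of_not_dvd hnd, add_zero]
  set f : ℕ → ℤ := fun p => if hp : p.Prime then @legendreSym p ⟨hp⟩ (-3) else 1 with hf
  have key : ((Q.eval t₂).natAbs.primeFactors.filter
      (fun p => ¬ p ∣ δ ∧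
        (padicValInt p (Q.eval t₂) % 6 = 2 ∨ padicValInt p (Q.eval t₂) % 6 = 4)))
      = insert q₀ ((Q.eval t₁).natAbs.primeFactors.filter
      (fun p => ¬ p ∣ δ ∧
        (padicValInt p (Q.eval t₁) % 6 = 2 ∨ padicValInt p (Q.eval t₁) % 6 = 4))) := by
    ext p
    rw [Finset.mem_insert, h1, h2, my_mem_iff δ hcq0 hη hcop2 p,
      my_mem_iff δ hc hl hcopl p]
    constructor
    · rintro ⟨hp, hδ', hmod⟩
      by_cases hpq : p = q₀
      · exact Or.inl hpq
      · right
        rw [hvp p hp hpq] at hmod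
        exact ⟨hp, hδ', hmod⟩
    · rintro (rfl | ⟨hp, hδ', hmod⟩)
      · exact ⟨hq, hqδ, by rw [hvq0]; omega⟩
      · by_cases hpq : p = q₀
        · subst hpq
          rw [padicValInt.eq_zero_of_not_dvd hq0_ne_c] at hmod
          omega
        · rw [← hvp p hp hpq] at hmod
          exact ⟨hp, hδ', hmod⟩
  have hnotmem : q₀ ∉ ((Q.eval t₁).natAbs.primeFactors.filter
      (fun p => ¬ p ∣ δ ∧
        (padicValInt p (Q.eval t₁) % 6 = 2 ∨ padicValInt p (Q.eval t₁) % 6 = 4))) := by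
    rw [h1, my_mem_iff δ hc hl hcopl q₀]
    rw [padicValInt.eq_zero_of_not_dvd hq0_ne_c]
    rintro ⟨-, -, h | h⟩ <;> omega
  unfold corrTerm
  rw [key, Finset.prod_insert hnotmem, dif_pos hq, hleg]
  ring
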